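/- Congestion-control sufficiency (Theorem 4). Suppose r̄_i(d,m) ≥ 0 are demand limits and each utility U_{idm} : [0, r̄_i(d,m)] → ℝ is nondecreasing, concave and continuously differentiable with U_{idm}(0) = 0. Suppose admitted rates r_i(d,m) ∈ [0, r̄_i(d,m)] and a feasible forwarding strategy φ are given, with nonnegative traffic vectors t⁻, t⁺ solving the traffic equations at input r, marginal vectors ρ, σ solving the marginal recursions, such that: (a) the sufficiency condition (8) holds at φ; and (b) for every i and (d,m): r_i(d,m) > 0 implies ρ_i(d,m) ≤ U'_{idm}(r_i(d,m)), and r_i(d,m) < r̄_i(d,m) implies ρ_i(d,m) ≥ U'_{idm}(r_i(d,m)). Then (r, φ) maximizes the utility-minus-cost objective: for every choice of admitted rates r* with r*_i(d,m) ∈ [0, r̄_i(d,m)] and every flow-feasible competitor (f⁻*, f⁺*, g*) at input rates r*, one has Σ_{i,(d,m)} U_{idm}(r_i(d,m)) − [Σ_{(i,j)∈E} D_{ij}(F_{ij}) + Σ_{i∈V} C_i(G_i)] ≥ Σ_{i,(d,m)} U_{idm}(r*_i(d,m)) − [Σ_{(i,j)∈E} D_{ij}(F*_{ij}) + Σ_{i∈V}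 C_i(G*_i)]. -/

import Mathlib

open Finset

section helpers
variable {V : Type*} [Fintype V] [DecidableEq V]

lemma aux_sum_E (E : Finset (V × V)) (h : V → V → ℝ) :
    ∑ e ∈ E, h e.1 e.2 = ∑ i, ∑ j ∈ univ.filter (fun j => (i, j) ∈ E), h i j := by
  exact Finset.sum_finset_product' E univ (fun i => univ.filter (fun j => (i, j) ∈ E))
    (by simp)

lemma aux_sum_E_swap (E : Finset (V × V)) (hEsymm : ∀ i j : V, (i, j) ∈ E → (j, i) ∈ E)
    (h : V → V → ℝ) :
    ∑ e ∈ E, h e.1 e.2 = ∑ e ∈ E, h e.2 e.1 := by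
  refine Finset.sum_nbij' (i := Prod.swap) (j := Prod.swap) ?_ ?_ ?_ ?_ ?_ <;>
    simp_all [Prod.swap]

lemma aux_tangent_convex {S : Set ℝ} {f : ℝ → ℝ} {f'x x y : ℝ} (hf : ConvexOn ℝ S f)
    (hx : x ∈ S) (hy : y ∈ S) (hd : HasDerivWithinAt f f'x S x) :
    f'x * (y - x) ≤ f y - f x := by
  rcases lt_trichotomy x y with h | h | h
  · have := hf.le_slope_of_hasDerivWithinAt hx hy h hd
    rw [slope_def_field] at this
    have hyx : 0 < y - x := by linarith
    calc f'x * (y - x) ≤ ((f y - f x) / (y - x)) * (y - x) := by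
          exact mul_le_mul_of_nonneg_right this hyx.le
      _ = f y - f x := by
          rw [div_mul_cancel₀ _ (by linarith : y - x ≠ (0:ℝ))]
  · simp [h]
  · have := hf.slope_le_of_hasDerivWithinAt hy hx h hd
    rw [slope_comm, slope_def_field] at this
    have hyx : y - x < 0 := by linarith
    have := mul_le_mul_of_nonpos_right this hyx.le
    calc f'x * (y - x) ≤ ((f y - f x) / (y - x)) * (y - x) := this
      _ = f y - f x := by
          rw [div_mul_cancel₀ _ (by linarith : y - x ≠ (0:ℝ))]

lemma aux_key_identity (E : Finset (V × V)) (hEsymm : ∀ i j : V, (i, j) ∈ E → (j, i) ∈ E)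
    (d : V) (ρ σ : V → ℝ) (hσd : σ d = 0)
    (a b : V → V → ℝ) (c : V → ℝ)
    (fm fp : V → V → ℝ) (gg rr : V → ℝ)
    (hconsm : ∀ i, (∑ j ∈ univ.filter fun j => (i, j) ∈ E, fm i j) + gg i
      = (∑ j ∈ univ.filter fun j => (i, j) ∈ E, fm j i) + rr i)
    (hconsp : ∀ i, i ≠ d → (∑ j ∈ univ.filter fun j => (i, j) ∈ E, fp i j)
      = (∑ j ∈ univ.filter fun j => (i, j) ∈ E, fp j i) + gg i)
    (hfpd : ∀ j, fp d j = 0) :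
    ∑ i, ρ i * rr i
      = ((∑ e ∈ E, (a e.1 e.2 * fm e.1 e.2 + b e.1 e.2 * fp e.1 e.2)) + (∑ i, c i * gg i))
      - (∑ e ∈ E, fm e.1 e.2 * (a e.1 e.2 + ρ e.2 - ρ e.1))
      - (∑ i, gg i * (c i + σ i - ρ i))
      - (∑ e ∈ E, fp e.1 e.2 * (b e.1 e.2 + σ e.2 - σ e.1)) := by
  have I1 : ∑ i, ρ i * rr i
      = (∑ e ∈ E, fm e.1 e.2 * (ρ e.1 - ρ e.2)) + ∑ i, ρ i * gg i := by
    have e1 : ∑ i, ρ i * rr i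
        = ∑ i, ((∑ j ∈ univ.filter fun j => (i, j) ∈ E, ρ i * fm i j) + ρ i * gg i
          - ∑ j ∈ univ.filter fun j => (i, j) ∈ E, ρ i * fm j i) := by
      refine Finset.sum_congr rfl fun i _ => ?_
      have h := hconsm i
      have hrr : rr i = (∑ j ∈ univ.filter fun j => (i, j) ∈ E, fm i j) + gg i
          - (∑ j ∈ univ.filter fun j => (i, j) ∈ E, fm j i) := by linarith
      rw [hrr, ← Finset.mul_sum, ← Finset.mul_sum]; ring
    rw [e1]
    rw [Finset.sum_sub_distrib, Finset.sum_add_distrib]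
    rw [← aux_sum_E E (fun i j => ρ i * fm i j), ← aux_sum_E E (fun i j => ρ i * fm j i)]
    rw [aux_sum_E_swap E hEsymm (fun i j => ρ i * fm j i)]
    rw [add_sub_right_comm, ← Finset.sum_sub_distrib]
    congr 1
    exact Finset.sum_congr rfl fun e _ => by ring
  have I2 : ∑ i, σ i * gg i = ∑ e ∈ E, fp e.1 e.2 * (σ e.1 - σ e.2) := by
    have e1 : ∑ i, σ i * gg i
        = ∑ i, ((∑ j ∈ univ.filter fun j => (i, j) ∈ E, σ i * fp i j)
          - ∑ j ∈ univ.filter fun j => (i, j) ∈ E, σ i * fp j i) := by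
      refine Finset.sum_congr rfl fun i _ => ?_
      by_cases hi : i = d
      · subst hi
        simp [hσd]
      · have h := hconsp i hi
        have hgg : gg i = (∑ j ∈ univ.filter fun j => (i, j) ∈ E, fp i j)
            - (∑ j ∈ univ.filter fun j => (i, j) ∈ E, fp j i) := by linarith
        rw [hgg, ← Finset.mul_sum, ← Finset.mul_sum]; ring
    rw [e1, Finset.sum_sub_distrib]
    rw [← aux_sum_E E (fun i j => σ i * fp i j), ← aux_sum_E E (fun i j => σ i * fp j i)]
    rw [aux_sum_E_swap E hEsymm (fun i j => σ i * fp j i)]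
    rw [← Finset.sum_sub_distrib]
    exact Finset.sum_congr rfl fun e _ => by ring
  have hS1 : ∑ e ∈ E, fm e.1 e.2 * (a e.1 e.2 + ρ e.2 - ρ e.1)
      = (∑ e ∈ E, a e.1 e.2 * fm e.1 e.2) - ∑ e ∈ E, fm e.1 e.2 * (ρ e.1 - ρ e.2) := by
    rw [← Finset.sum_sub_distrib]; exact Finset.sum_congr rfl fun e _ => by ring
  have hS3 : ∑ e ∈ E, fp e.1 e.2 * (b e.1 e.2 + σ e.2 - σ e.1)
      = (∑ e ∈ E, b e.1 e.2 * fp e.1 e.2) - ∑ e ∈ E, fp e.1 e.2 * (σ e.1 - σ e.2) := by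
    rw [← Finset.sum_sub_distrib]; exact Finset.sum_congr rfl fun e _ => by ring
  have hS2 : ∑ i, gg i * (c i + σ i - ρ i)
      = (∑ i, c i * gg i) + (∑ i, σ i * gg i) - (∑ i, ρ i * gg i) := by
    rw [← Finset.sum_add_distrib, ← Finset.sum_sub_distrib]
    exact Finset.sum_congr rfl fun i _ => by ring
  have hPQ : ∑ e ∈ E, (a e.1 e.2 * fm e.1 e.2 + b e.1 e.2 * fp e.1 e.2)
      = (∑ e ∈ E, a e.1 e.2 * fm e.1 e.2) + ∑ e ∈ E, b e.1 e.2 * fp e.1 e.2 :=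
    Finset.sum_add_distrib
  linarith [I1, I2, hS1, hS2, hS3, hPQ]

end helpers

/-- Theorem 4 (congestion-control sufficiency): if the admitted rates `r ∈ [0, r̄]` and the
feasible strategy `φ` satisfy the sufficiency condition (8) together with the admission
threshold conditions (`r_i(d,m) > 0 ⟹ ρ_i(d,m) ≤ U'_{idm}(r_i(d,m))` and
`r_i(d,m) < r̄_i(d,m) ⟹ ρ_i(d,m) ≥ U'_{idm}(r_i(d,m))`), then `(r, φ)` maximizes
utility-minus-cost over all admitted rates `r* ∈ [0, r̄]` and all flow-feasible competitors at
input rates `r*`. -/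
theorem stmt_11
    {V M : Type*} [Fintype V] [DecidableEq V] [Fintype M] [DecidableEq M]
    -- network
    (E : Finset (V × V))
    (hEsymm : ∀ i j : V, (i, j) ∈ E → (j, i) ∈ E)
    (hEirrefl : ∀ i : V, (i, i) ∉ E)
    (Tsk : Finset (V × M))
    (Lm Lp : M → ℝ) (hLm : ∀ m, 0 < Lm m) (hLp : ∀ m, 0 < Lp m)
    (w : V → M → ℝ) (hw : ∀ i m, 0 < w i m)
    (r : V → V × M → ℝ)
    -- demand limits and utilities
    (rbar : V → V × M → ℝ) (hrbar : ∀ i dm, 0 ≤ rbar i dm)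
    (U U' : V → V × M → ℝ → ℝ)
    (hUmono : ∀ i dm, MonotoneOn (U i dm) (Set.Icc 0 (rbar i dm)))
    (hUconc : ∀ i dm, ConcaveOn ℝ (Set.Icc 0 (rbar i dm)) (U i dm))
    (hUderiv : ∀ i dm, ∀ x ∈ Set.Icc 0 (rbar i dm),
      HasDerivWithinAt (U i dm) (U' i dm x) (Set.Icc 0 (rbar i dm)) x)
    (hU0 : ∀ i dm, U i dm 0 = 0)
    -- admitted rates
    (hr_mem : ∀ i dm, r i dm ∈ Set.Icc 0 (rbar i dm))
    -- feasible forwarding strategy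
    (φm : V → Option V → V × M → ℝ) (φp : V → V → V × M → ℝ)
    (hφm0 : ∀ i j dm, 0 ≤ φm i j dm) (hφm1 : ∀ i j dm, φm i j dm ≤ 1)
    (hφp0 : ∀ i j dm, 0 ≤ φp i j dm) (hφp1 : ∀ i j dm, φp i j dm ≤ 1)
    (hφmE : ∀ i j dm, (i, j) ∉ E → φm i (some j) dm = 0)
    (hφpE : ∀ i j dm, (i, j) ∉ E → φp i j dm = 0)
    (hφmsum : ∀ dm ∈ Tsk, ∀ i : V, φm i none dm + ∑ j, φm i (some j) dm = 1)
    (hφpsum : ∀ dm ∈ Tsk, ∀ i : V, i ≠ dm.1 → ∑ j, φp i j dm = 1)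
    (hφpdest : ∀ dm ∈ Tsk, ∀ j, φp dm.1 j dm = 0)
    -- traffic vectors
    (tm tp : V → V × M → ℝ)
    (htm0 : ∀ i dm, 0 ≤ tm i dm) (htp0 : ∀ i dm, 0 ≤ tp i dm)
    (g : V → V × M → ℝ) (hg : ∀ i dm, g i dm = tm i dm * φm i none dm)
    (htm : ∀ dm ∈ Tsk, ∀ i : V, tm i dm = r i dm + ∑ j, tm j dm * φm j (some i) dm)
    (htp : ∀ dm ∈ Tsk, ∀ i : V, tp i dm = g i dm + ∑ j, tp j dm * φp j i dm)
    -- link flows and workloads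
    (F : V → V → ℝ)
    (hF : ∀ i j, F i j = ∑ dm ∈ Tsk,
      (Lm dm.2 * (tm i dm * φm i (some j) dm) + Lp dm.2 * (tp i dm * φp i j dm)))
    (G : V → ℝ) (hG : ∀ i, G i = ∑ dm ∈ Tsk, w i dm.2 * g i dm)
    -- costs
    (D D' : V → V → ℝ → ℝ) (C C' : V → ℝ → ℝ)
    (hDmono : ∀ i j, Monotone (D i j))
    (hDconv : ∀ i j, ConvexOn ℝ Set.univ (D i j))
    (hDderiv : ∀ i j x, HasDerivAt (D i j) (D' i j x) x)
    (hCmono : ∀ i, Monotone (C i))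
    (hCconv : ∀ i, ConvexOn ℝ Set.univ (C i))
    (hCderiv : ∀ i x, HasDerivAt (C i) (C' i x) x)
    -- marginal vectors
    (σ ρ : V → V × M → ℝ)
    (hσd : ∀ dm ∈ Tsk, σ dm.1 dm = 0)
    (hσ : ∀ dm ∈ Tsk, ∀ i : V, i ≠ dm.1 →
      σ i dm = ∑ j ∈ univ.filter (fun j => (i, j) ∈ E),
        φp i j dm * (Lp dm.2 * D' i j (F i j) + σ j dm))
    (hρ : ∀ dm ∈ Tsk, ∀ i : V,
      ρ i dm = (∑ j ∈ univ.filter (fun j => (i, j) ∈ E),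
          φm i (some j) dm * (Lm dm.2 * D' i j (F i j) + ρ j dm))
        + φm i none dm * (w i dm.2 * C' i (G i) + σ i dm))

    -- marginal link/CPU costs
    (δm : V → Option V → V × M → ℝ) (δp : V → V → V × M → ℝ)
    (hδms : ∀ i j dm, δm i (some j) dm = Lm dm.2 * D' i j (F i j) + ρ j dm)
    (hδmn : ∀ i dm, δm i none dm = w i dm.2 * C' i (G i) + σ i dm)
    (hδp : ∀ i j dm, δp i j dm = Lp dm.2 * D' i j (F i j) + σ j dm)
    -- sufficiency condition (8)
    (hsuffm : ∀ dm ∈ Tsk, ∀ i : V,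
      ∀ j ∈ insert (none : Option V) ((univ.filter (fun j => (i, j) ∈ E)).image some),
        0 < φm i j dm →
        ∀ k ∈ insert (none : Option V) ((univ.filter (fun j => (i, j) ∈ E)).image some),
          δm i j dm ≤ δm i k dm)
    (hsuffp : ∀ dm ∈ Tsk, ∀ i : V, i ≠ dm.1 →
      ∀ j : V, (i, j) ∈ E → 0 < φp i j dm →
        ∀ k : V, (i, k) ∈ E → δp i j dm ≤ δp i k dm)
    -- admission threshold conditions (b)
    (hthr1 : ∀ dm ∈ Tsk, ∀ i : V, 0 < r i dm → ρ i dm ≤ U' i dm (r i dm))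
    (hthr2 : ∀ dm ∈ Tsk, ∀ i : V, r i dm < rbar i dm → U' i dm (r i dm) ≤ ρ i dm)
    -- competitor admitted rates
    (rstar : V → V × M → ℝ) (hrstar : ∀ i dm, rstar i dm ∈ Set.Icc 0 (rbar i dm))
    -- flow-feasible competitor
    (fm' fp' : V → V → V × M → ℝ) (g' : V → V × M → ℝ)
    (hfm'0 : ∀ i j dm, 0 ≤ fm' i j dm) (hfp'0 : ∀ i j dm, 0 ≤ fp' i j dm)
    (hg'0 : ∀ i dm, 0 ≤ g' i dm)
    (hfm'E : ∀ i j dm, (i, j) ∉ E → fm' i j dm = 0)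
    (hfp'E : ∀ i j dm, (i, j) ∉ E → fp' i j dm = 0)
    (hfm'c : ∀ dm ∈ Tsk, ∀ i : V,
      (∑ j ∈ univ.filter (fun j => (i, j) ∈ E), fm' i j dm) + g' i dm
        = (∑ j ∈ univ.filter (fun j => (i, j) ∈ E), fm' j i dm) + rstar i dm)
    (hfp'c : ∀ dm ∈ Tsk, ∀ i : V, i ≠ dm.1 →
      (∑ j ∈ univ.filter (fun j => (i, j) ∈ E), fp' i j dm)
        = (∑ j ∈ univ.filter (fun j => (i, j) ∈ E), fp' j i dm) + g' i dm)
    (hfp'd : ∀ dm ∈ Tsk, ∀ j, fp' dm.1 j dm = 0)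
    (F' : V → V → ℝ)
    (hF' : ∀ i j, F' i j = ∑ dm ∈ Tsk, (Lm dm.2 * fm' i j dm + Lp dm.2 * fp' i j dm))
    (G' : V → ℝ) (hG' : ∀ i, G' i = ∑ dm ∈ Tsk, w i dm.2 * g' i dm)
    :
    (∑ i, ∑ dm ∈ Tsk, U i dm (rstar i dm))
      - ((∑ e ∈ E, D e.1 e.2 (F' e.1 e.2)) + ∑ i, C i (G' i))
      ≤ (∑ i, ∑ dm ∈ Tsk, U i dm (r i dm))
      - ((∑ e ∈ E, D e.1 e.2 (F e.1 e.2)) + ∑ i, C i (G i)) := by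
    classical
  -- notation shortcuts
  have hnone : ∀ i : V, (none : Option V) ∉ (univ.filter (fun j => (i, j) ∈ E)).image some := by
    simp
  have hfilter_sum : ∀ (i : V) (h : V → ℝ), (∀ j, (i, j) ∉ E → h j = 0) →
      ∑ j ∈ univ.filter (fun j => (i, j) ∈ E), h j = ∑ j, h j := by
    intro i h hh
    refine Finset.sum_subset (Finset.subset_univ _) fun j _ hj => hh j (by simpa using hj)
  -- ρ as convex combination of δm over the allowed set
  have hρcombo : ∀ dm ∈ Tsk, ∀ i : V,
      ρ i dm = ∑ k ∈ insert (none : Option V) ((univ.filter (fun j => (i, j) ∈ E)).image some),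
        φm i k dm * δm i k dm := by
    intro dm hdm i
    rw [Finset.sum_insert (hnone i), Finset.sum_image (by intro x _ y _ h; simpa using h)]
    rw [hρ dm hdm i, hδmn, add_comm]
    congr 1
    exact Finset.sum_congr rfl fun j _ => by rw [hδms]
  have hφsumS : ∀ dm ∈ Tsk, ∀ i : V,
      ∑ k ∈ insert (none : Option V) ((univ.filter (fun j => (i, j) ∈ E)).image some),
        φm i k dm = 1 := by
    intro dm hdm i
    rw [Finset.sum_insert (hnone i), Finset.sum_image (by intro x _ y _ h; simpa using h)]
    rw [hfilter_sum i (fun j => φm i (some j) dm) (fun j hj => hφmE i j dm hj)]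
    exact hφmsum dm hdm i
  have hρle : ∀ dm ∈ Tsk, ∀ i : V,
      ∀ j ∈ insert (none : Option V) ((univ.filter (fun j => (i, j) ∈ E)).image some),
        ρ i dm ≤ δm i j dm := by
    intro dm hdm i j hj
    rw [hρcombo dm hdm i]
    calc ∑ k ∈ insert (none : Option V) ((univ.filter (fun j => (i, j) ∈ E)).image some),
          φm i k dm * δm i k dm
        ≤ ∑ k ∈ insert (none : Option V) ((univ.filter (fun j => (i, j) ∈ E)).image some),
          φm i k dm * δm i j dm := by
          refine Finset.sum_le_sum fun k hk => ?_
          rcases (hφm0 i k dm).lt_or_eq with hpos | h0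
          · exact mul_le_mul_of_nonneg_left (hsuffm dm hdm i k hk hpos j hj) (hφm0 i k dm)
          · rw [← h0, zero_mul, zero_mul]
      _ = δm i j dm := by rw [← Finset.sum_mul, hφsumS dm hdm i, one_mul]
  have hρge : ∀ dm ∈ Tsk, ∀ i : V,
      ∀ j ∈ insert (none : Option V) ((univ.filter (fun j => (i, j) ∈ E)).image some),
        0 < φm i j dm → δm i j dm ≤ ρ i dm := by
    intro dm hdm i j hj hpos
    rw [hρcombo dm hdm i]
    calc δm i j dm
        = ∑ k ∈ insert (none : Option V) ((univ.filter (fun j => (i, j) ∈ E)).image some),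
          φm i k dm * δm i j dm := by rw [← Finset.sum_mul, hφsumS dm hdm i, one_mul]
      _ ≤ ∑ k ∈ insert (none : Option V) ((univ.filter (fun j => (i, j) ∈ E)).image some),
          φm i k dm * δm i k dm := by
          refine Finset.sum_le_sum fun k hk => ?_
          exact mul_le_mul_of_nonneg_left (hsuffm dm hdm i j hj hpos k hk) (hφm0 i k dm)
  -- σ as convex combination of δp over neighbours
  have hσcombo : ∀ dm ∈ Tsk, ∀ i : V, i ≠ dm.1 →
      σ i dm = ∑ j ∈ univ.filter (fun j => (i, j) ∈ E), φp i j dm * δp i j dm := by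
    intro dm hdm i hi
    rw [hσ dm hdm i hi]
    exact Finset.sum_congr rfl fun j _ => by rw [hδp]
  have hφpsumN : ∀ dm ∈ Tsk, ∀ i : V, i ≠ dm.1 →
      ∑ j ∈ univ.filter (fun j => (i, j) ∈ E), φp i j dm = 1 := by
    intro dm hdm i hi
    rw [hfilter_sum i (fun j => φp i j dm) (fun j hj => hφpE i j dm hj)]
    exact hφpsum dm hdm i hi
  have hσle : ∀ dm ∈ Tsk, ∀ i : V, i ≠ dm.1 → ∀ j : V, (i, j) ∈ E →
      σ i dm ≤ δp i j dm := by
    intro dm hdm i hi j hj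
    rw [hσcombo dm hdm i hi]
    calc ∑ k ∈ univ.filter (fun j => (i, j) ∈ E), φp i k dm * δp i k dm
        ≤ ∑ k ∈ univ.filter (fun j => (i, j) ∈ E), φp i k dm * δp i j dm := by
          refine Finset.sum_le_sum fun k hk => ?_
          rcases (hφp0 i k dm).lt_or_eq with hpos | h0
          · refine mul_le_mul_of_nonneg_left ?_ (hφp0 i k dm)
            exact hsuffp dm hdm i hi k (by simpa using hk) hpos j hj
          · rw [← h0, zero_mul, zero_mul]
      _ = δp i j dm := by rw [← Finset.sum_mul, hφpsumN dm hdm i hi, one_mul]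
  have hσge : ∀ dm ∈ Tsk, ∀ i : V, i ≠ dm.1 → ∀ j : V, (i, j) ∈ E →
      0 < φp i j dm → δp i j dm ≤ σ i dm := by
    intro dm hdm i hi j hj hpos
    rw [hσcombo dm hdm i hi]
    calc δp i j dm
        = ∑ k ∈ univ.filter (fun j => (i, j) ∈ E), φp i k dm * δp i j dm := by
          rw [← Finset.sum_mul, hφpsumN dm hdm i hi, one_mul]
      _ ≤ ∑ k ∈ univ.filter (fun j => (i, j) ∈ E), φp i k dm * δp i k dm := by
          refine Finset.sum_le_sum fun k hk => ?_
          refine mul_le_mul_of_nonneg_left ?_ (hφp0 i k dm)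
          exact hsuffp dm hdm i hi j hj hpos k (by simpa using hk)
  -- conservation of the actual flows
  have hconsmA : ∀ dm ∈ Tsk, ∀ i : V,
      (∑ j ∈ univ.filter (fun j => (i, j) ∈ E), tm i dm * φm i (some j) dm) + g i dm
        = (∑ j ∈ univ.filter (fun j => (i, j) ∈ E), tm j dm * φm j (some i) dm) + r i dm := by
    intro dm hdm i
    have h1 : ∑ j ∈ univ.filter (fun j => (i, j) ∈ E), tm i dm * φm i (some j) dm
        = ∑ j, tm i dm * φm i (some j) dm :=
      hfilter_sum i _ (fun j hj => by rw [hφmE i j dm hj, mul_zero])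
    have h2 : ∑ j ∈ univ.filter (fun j => (i, j) ∈ E), tm j dm * φm j (some i) dm
        = ∑ j, tm j dm * φm j (some i) dm :=
      hfilter_sum i _ (fun j hj => by
        rw [hφmE j i dm (fun hE => hj (hEsymm j i hE)), mul_zero])
    rw [h1, h2, hg i dm, ← Finset.mul_sum]
    have h3 := hφmsum dm hdm i
    have h4 := htm dm hdm i
    have h5 : tm i dm * φm i none dm + tm i dm * (∑ j, φm i (some j) dm) = tm i dm := by
      rw [← mul_add, h3, mul_one]
    linarith
  have hconspA : ∀ dm ∈ Tsk, ∀ i : V, i ≠ dm.1 →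
      (∑ j ∈ univ.filter (fun j => (i, j) ∈ E), tp i dm * φp i j dm)
        = (∑ j ∈ univ.filter (fun j => (i, j) ∈ E), tp j dm * φp j i dm) + g i dm := by
    intro dm hdm i hi
    have h1 : ∑ j ∈ univ.filter (fun j => (i, j) ∈ E), tp i dm * φp i j dm
        = ∑ j, tp i dm * φp i j dm :=
      hfilter_sum i _ (fun j hj => by rw [hφpE i j dm hj, mul_zero])
    have h2 : ∑ j ∈ univ.filter (fun j => (i, j) ∈ E), tp j dm * φp j i dm
        = ∑ j, tp j dm * φp j i dm :=
      hfilter_sum i _ (fun j hj => by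
        rw [hφpE j i dm (fun hE => hj (hEsymm j i hE)), mul_zero])
    rw [h1, h2, ← Finset.mul_sum, hφpsum dm hdm i hi, mul_one]
    have h4 := htp dm hdm i
    linarith
  have hfpdA : ∀ dm ∈ Tsk, ∀ j : V, tp dm.1 dm * φp dm.1 j dm = 0 := by
    intro dm hdm j; rw [hφpdest dm hdm j, mul_zero]
  -- key equality for the actual operating point
  have hactual : ∀ dm ∈ Tsk,
      ∑ i, ρ i dm * r i dm
        = (∑ e ∈ E, (Lm dm.2 * D' e.1 e.2 (F e.1 e.2) * (tm e.1 dm * φm e.1 (some e.2) dm)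
            + Lp dm.2 * D' e.1 e.2 (F e.1 e.2) * (tp e.1 dm * φp e.1 e.2 dm)))
          + ∑ i, w i dm.2 * C' i (G i) * g i dm := by
    intro dm hdm
    have key := aux_key_identity E hEsymm dm.1 (fun i => ρ i dm) (fun i => σ i dm)
      (hσd dm hdm)
      (fun i j => Lm dm.2 * D' i j (F i j)) (fun i j => Lp dm.2 * D' i j (F i j))
      (fun i => w i dm.2 * C' i (G i))
      (fun i j => tm i dm * φm i (some j) dm) (fun i j => tp i dm * φp i j dm)
      (fun i => g i dm) (fun i => r i dm)
      (hconsmA dm hdm) (hconspA dm hdm) (hfpdA dm hdm)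
    rw [key]
    have z1 : ∑ e ∈ E, tm e.1 dm * φm e.1 (some e.2) dm
        * (Lm dm.2 * D' e.1 e.2 (F e.1 e.2) + ρ e.2 dm - ρ e.1 dm) = 0 := by
      refine Finset.sum_eq_zero fun e he => ?_
      have heE : (e.1, e.2) ∈ E := by simpa using he
      have hjS : some e.2 ∈ insert (none : Option V)
          ((univ.filter (fun j => (e.1, j) ∈ E)).image some) := by simp [heE]
      rcases (hφm0 e.1 (some e.2) dm).lt_or_eq with hpos | h0
      · have h1 := hρle dm hdm e.1 (some e.2) hjS
        have h2 := hρge dm hdm e.1 (some e.2) hjS hpos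
        have h3 : δm e.1 (some e.2) dm = ρ e.1 dm := le_antisymm h2 h1
        rw [hδms] at h3
        rw [show Lm dm.2 * D' e.1 e.2 (F e.1 e.2) + ρ e.2 dm - ρ e.1 dm = 0 from by
          linarith, mul_zero]
      · rw [← h0, mul_zero, zero_mul]
    have z2 : ∑ i, g i dm * (w i dm.2 * C' i (G i) + σ i dm - ρ i dm) = 0 := by
      refine Finset.sum_eq_zero fun i _ => ?_
      rcases (hφm0 i none dm).lt_or_eq with hpos | h0
      · have hnS : (none : Option V) ∈ insert (none : Option V)
            ((univ.filter (fun j => (i, j) ∈ E)).image some) := Finset.mem_insert_self _ _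
        have h1 := hρle dm hdm i none hnS
        have h2 := hρge dm hdm i none hnS hpos
        have h3 : δm i none dm = ρ i dm := le_antisymm h2 h1
        rw [hδmn] at h3
        rw [show w i dm.2 * C' i (G i) + σ i dm - ρ i dm = 0 from by linarith, mul_zero]
      · rw [hg i dm, ← h0, mul_zero, zero_mul]
    have z3 : ∑ e ∈ E, tp e.1 dm * φp e.1 e.2 dm
        * (Lp dm.2 * D' e.1 e.2 (F e.1 e.2) + σ e.2 dm - σ e.1 dm) = 0 := by
      refine Finset.sum_eq_zero fun e he => ?_
      have heE : (e.1, e.2) ∈ E := by simpa using he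
      by_cases hd : e.1 = dm.1
      · rw [hd, hφpdest dm hdm, mul_zero, zero_mul]
      · rcases (hφp0 e.1 e.2 dm).lt_or_eq with hpos | h0
        · have h1 := hσle dm hdm e.1 hd e.2 heE
          have h2 := hσge dm hdm e.1 hd e.2 heE hpos
          have h3 : δp e.1 e.2 dm = σ e.1 dm := le_antisymm h2 h1
          rw [hδp] at h3
          rw [show Lp dm.2 * D' e.1 e.2 (F e.1 e.2) + σ e.2 dm - σ e.1 dm = 0 from by
            linarith, mul_zero]
        · rw [← h0, mul_zero, zero_mul]
    rw [z1, z2, z3]; ring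
  -- key inequality for the competitor
  have hcomp : ∀ dm ∈ Tsk,
      ∑ i, ρ i dm * rstar i dm
        ≤ (∑ e ∈ E, (Lm dm.2 * D' e.1 e.2 (F e.1 e.2) * fm' e.1 e.2 dm
            + Lp dm.2 * D' e.1 e.2 (F e.1 e.2) * fp' e.1 e.2 dm))
          + ∑ i, w i dm.2 * C' i (G i) * g' i dm := by
    intro dm hdm
    have key := aux_key_identity E hEsymm dm.1 (fun i => ρ i dm) (fun i => σ i dm)
      (hσd dm hdm)
      (fun i j => Lm dm.2 * D' i j (F i j)) (fun i j => Lp dm.2 * D' i j (F i j))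
      (fun i => w i dm.2 * C' i (G i))
      (fun i j => fm' i j dm) (fun i j => fp' i j dm)
      (fun i => g' i dm) (fun i => rstar i dm)
      (hfm'c dm hdm) (hfp'c dm hdm) (hfp'd dm hdm)
    rw [key]
    have n1 : 0 ≤ ∑ e ∈ E, fm' e.1 e.2 dm
        * (Lm dm.2 * D' e.1 e.2 (F e.1 e.2) + ρ e.2 dm - ρ e.1 dm) := by
      refine Finset.sum_nonneg fun e he => ?_
      have heE : (e.1, e.2) ∈ E := by simpa using he
      have hjS : some e.2 ∈ insert (none : Option V)
          ((univ.filter (fun j => (e.1, j) ∈ E)).image some) := by simp [heE]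
      have h1 := hρle dm hdm e.1 (some e.2) hjS
      rw [hδms] at h1
      exact mul_nonneg (hfm'0 e.1 e.2 dm) (by linarith)
    have n2 : 0 ≤ ∑ i, g' i dm * (w i dm.2 * C' i (G i) + σ i dm - ρ i dm) := by
      refine Finset.sum_nonneg fun i _ => ?_
      have hnS : (none : Option V) ∈ insert (none : Option V)
          ((univ.filter (fun j => (i, j) ∈ E)).image some) := Finset.mem_insert_self _ _
      have h1 := hρle dm hdm i none hnS
      rw [hδmn] at h1
      exact mul_nonneg (hg'0 i dm) (by linarith)
    have n3 : 0 ≤ ∑ e ∈ E, fp' e.1 e.2 dm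
        * (Lp dm.2 * D' e.1 e.2 (F e.1 e.2) + σ e.2 dm - σ e.1 dm) := by
      refine Finset.sum_nonneg fun e he => ?_
      have heE : (e.1, e.2) ∈ E := by simpa using he
      by_cases hd : e.1 = dm.1
      · rw [hd, hfp'd dm hdm, zero_mul]
      · have h1 := hσle dm hdm e.1 hd e.2 heE
        rw [hδp] at h1
        exact mul_nonneg (hfp'0 e.1 e.2 dm) (by linarith)
    linarith
  -- aggregate over tasks
  have hAgg : ∑ dm ∈ Tsk, ∑ i, ρ i dm * r i dm
      = (∑ e ∈ E, D' e.1 e.2 (F e.1 e.2) * F e.1 e.2) + ∑ i, C' i (G i) * G i := by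
    rw [Finset.sum_congr rfl hactual, Finset.sum_add_distrib]
    congr 1
    · rw [Finset.sum_comm]
      refine Finset.sum_congr rfl fun e _ => ?_
      rw [hF e.1 e.2, Finset.mul_sum]
      exact Finset.sum_congr rfl fun dm _ => by ring
    · rw [Finset.sum_comm]
      refine Finset.sum_congr rfl fun i _ => ?_
      rw [hG i, Finset.mul_sum]
      exact Finset.sum_congr rfl fun dm _ => by ring
  have hBgg : ∑ dm ∈ Tsk, ∑ i, ρ i dm * rstar i dm
      ≤ (∑ e ∈ E, D' e.1 e.2 (F e.1 e.2) * F' e.1 e.2) + ∑ i, C' i (G i) * G' i := by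
    calc ∑ dm ∈ Tsk, ∑ i, ρ i dm * rstar i dm
        ≤ ∑ dm ∈ Tsk, ((∑ e ∈ E, (Lm dm.2 * D' e.1 e.2 (F e.1 e.2) * fm' e.1 e.2 dm
            + Lp dm.2 * D' e.1 e.2 (F e.1 e.2) * fp' e.1 e.2 dm))
          + ∑ i, w i dm.2 * C' i (G i) * g' i dm) := Finset.sum_le_sum hcomp
      _ = (∑ e ∈ E, D' e.1 e.2 (F e.1 e.2) * F' e.1 e.2) + ∑ i, C' i (G i) * G' i := by
          rw [Finset.sum_add_distrib]
          congr 1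
          · rw [Finset.sum_comm]
            refine Finset.sum_congr rfl fun e _ => ?_
            rw [hF' e.1 e.2, Finset.mul_sum]
            exact Finset.sum_congr rfl fun dm _ => by ring
          · rw [Finset.sum_comm]
            refine Finset.sum_congr rfl fun i _ => ?_
            rw [hG' i, Finset.mul_sum]
            exact Finset.sum_congr rfl fun dm _ => by ring
  -- utility step
  have hUstep : ∀ i : V, ∀ dm ∈ Tsk,
      U i dm (rstar i dm) - U i dm (r i dm) ≤ ρ i dm * (rstar i dm - r i dm) := by
    intro i dm hdm
    have hneg : ConvexOn ℝ (Set.Icc 0 (rbar i dm)) (-U i dm) := (hUconc i dm).neg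
    have hdn : HasDerivWithinAt (-U i dm) (-(U' i dm (r i dm)))
        (Set.Icc 0 (rbar i dm)) (r i dm) := (hUderiv i dm _ (hr_mem i dm)).neg
    have hconc := aux_tangent_convex hneg (hr_mem i dm) (hrstar i dm) hdn
    simp only [Pi.neg_apply] at hconc
    have hthr : U' i dm (r i dm) * (rstar i dm - r i dm)
        ≤ ρ i dm * (rstar i dm - r i dm) := by
      rcases lt_trichotomy (rstar i dm) (r i dm) with hlt | heq | hgt
      · have hrpos : 0 < r i dm := lt_of_le_of_lt (hrstar i dm).1 hlt
        have := hthr1 dm hdm i hrpos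
        nlinarith
      · rw [heq]; simp
      · have hrlt : r i dm < rbar i dm := lt_of_lt_of_le hgt (hrstar i dm).2
        have := hthr2 dm hdm i hrlt
        nlinarith
    nlinarith [hconc, hthr]
  -- cost steps
  have hDstep : ∀ e ∈ E, D' e.1 e.2 (F e.1 e.2) * (F' e.1 e.2 - F e.1 e.2)
      ≤ D e.1 e.2 (F' e.1 e.2) - D e.1 e.2 (F e.1 e.2) := fun e _ =>
    aux_tangent_convex (hDconv e.1 e.2) (Set.mem_univ _) (Set.mem_univ _)
      ((hDderiv e.1 e.2 _).hasDerivWithinAt)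
  have hCstep : ∀ i : V, C' i (G i) * (G' i - G i) ≤ C i (G' i) - C i (G i) := fun i =>
    aux_tangent_convex (hCconv i) (Set.mem_univ _) (Set.mem_univ _)
      ((hCderiv i _).hasDerivWithinAt)
  -- assemble
  have main1 : ∑ i, ∑ dm ∈ Tsk, (U i dm (rstar i dm) - U i dm (r i dm))
      ≤ ∑ i, ∑ dm ∈ Tsk, ρ i dm * (rstar i dm - r i dm) :=
    Finset.sum_le_sum fun i _ => Finset.sum_le_sum fun dm hdm => hUstep i dm hdm
  have main2 : ∑ i, ∑ dm ∈ Tsk, ρ i dm * (rstar i dm - r i dm)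
      = (∑ dm ∈ Tsk, ∑ i, ρ i dm * rstar i dm) - ∑ dm ∈ Tsk, ∑ i, ρ i dm * r i dm := by
    rw [Finset.sum_comm, ← Finset.sum_sub_distrib]
    refine Finset.sum_congr rfl fun dm _ => ?_
    rw [← Finset.sum_sub_distrib]
    exact Finset.sum_congr rfl fun i _ => by ring
  have main4D : (∑ e ∈ E, D' e.1 e.2 (F e.1 e.2) * F' e.1 e.2)
      - (∑ e ∈ E, D' e.1 e.2 (F e.1 e.2) * F e.1 e.2)
      = ∑ e ∈ E, D' e.1 e.2 (F e.1 e.2) * (F' e.1 e.2 - F e.1 e.2) := by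
    rw [← Finset.sum_sub_distrib]
    exact Finset.sum_congr rfl fun e _ => by ring
  have main4C : (∑ i, C' i (G i) * G' i) - (∑ i, C' i (G i) * G i)
      = ∑ i, C' i (G i) * (G' i - G i) := by
    rw [← Finset.sum_sub_distrib]
    exact Finset.sum_congr rfl fun i _ => by ring
  have main5D : ∑ e ∈ E, D' e.1 e.2 (F e.1 e.2) * (F' e.1 e.2 - F e.1 e.2)
      ≤ ∑ e ∈ E, (D e.1 e.2 (F' e.1 e.2) - D e.1 e.2 (F e.1 e.2)) :=
    Finset.sum_le_sum hDstep
  have main5C : ∑ i, C' i (G i) * (G' i - G i)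
      ≤ ∑ i, (C i (G' i) - C i (G i)) :=
    Finset.sum_le_sum fun i _ => hCstep i
  have eU : ∑ i, ∑ dm ∈ Tsk, (U i dm (rstar i dm) - U i dm (r i dm))
      = (∑ i, ∑ dm ∈ Tsk, U i dm (rstar i dm)) - ∑ i, ∑ dm ∈ Tsk, U i dm (r i dm) := by
    rw [← Finset.sum_sub_distrib]
    exact Finset.sum_congr rfl fun i _ => Finset.sum_sub_distrib _ _
  have eD : ∑ e ∈ E, (D e.1 e.2 (F' e.1 e.2) - D e.1 e.2 (F e.1 e.2))
      = (∑ e ∈ E, D e.1 e.2 (F' e.1 e.2)) - ∑ e ∈ E, D e.1 e.2 (F e.1 e.2) :=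
    Finset.sum_sub_distrib _ _
  have eC : ∑ i, (C i (G' i) - C i (G i))
      = (∑ i, C i (G' i)) - ∑ i, C i (G i) :=
    Finset.sum_sub_distrib _ _
  linarith [main1, main2, hAgg, hBgg, main4D, main4C, main5D, main5C, eU, eD, eC]
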